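/- Under the same hypotheses as the Canonical Equation (Λ : ℝⁿ × (0,∞) → ℝ C¹; M a probability density on ℝⁿ with ∫M(z)(1+|z|)e^{p·z}dz < ∞ for all p; U : [0,T] × ℝⁿ → ℝ C² solving ∂_tU(t,y) = −Λ(y, ∫M(z)e^{∇_yU(t,y)·z}dz); ȳ : [0,T] → ℝⁿ C¹ with ∇_yU(t,ȳ(t)) = 0 and D²_yU(t,ȳ(t)) invertible), assume in addition that M is even, i.e. ∫_{ℝⁿ} M(z)·z dz = 0, and that D²_yU(t,ȳ(t)) is negative definite for all t. Then the map t ↦ Λ(ȳ(t), 1) is nonincreasing: its derivative satisfies d/dt[Λ(ȳ(t),1)] = ∇_yΛ(ȳ(t),1) · [(D²_yU(t,ȳ(t)))⁻¹ · ∇_yΛ(ȳ(t),1)] ≤ 0 for all t ∈ [0,T]. -/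

import Mathlib

open MeasureTheory Set
open scoped RealInnerProductSpace

set_option maxHeartbeats 1000000
set_option synthInstance.maxHeartbeats 400000

/-- sign vector for a subset s : coordinates 1 on s, -1 off s -/
noncomputable def sgnVec (n : ℕ) (s : Finset (Fin n)) : EuclideanSpace ℝ (Fin n) :=
  WithLp.toLp 2 (fun i => if i ∈ s then (1:ℝ) else -1)

lemma norm_le_sum_abs {n : ℕ} (z : EuclideanSpace ℝ (Fin n)) :
    ‖z‖ ≤ ∑ i, |z i| := by
  have hz : z = ∑ i, z i • (EuclideanSpace.single i (1:ℝ)) := by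
    ext j
    rw [WithLp.ofLp_sum, Finset.sum_apply j Finset.univ (fun i => (z i • EuclideanSpace.single i (1:ℝ) : EuclideanSpace ℝ (Fin n)))]
    simp [EuclideanSpace.single_apply]
  calc ‖z‖ = ‖∑ i, z i • (EuclideanSpace.single i (1:ℝ))‖ := by rw [← hz]
    _ ≤ ∑ i, ‖z i • (EuclideanSpace.single i (1:ℝ))‖ := norm_sum_le _ _
    _ = ∑ i, |z i| := by
        simp [norm_smul, EuclideanSpace.norm_single, abs_mul]

lemma exp_norm_le_sum {n : ℕ} (z : EuclideanSpace ℝ (Fin n)) :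
    Real.exp ‖z‖ ≤ ∑ s ∈ (Finset.univ : Finset (Fin n)).powerset,
      Real.exp ⟪sgnVec n s, z⟫ := by
  have h1 : Real.exp ‖z‖ ≤ Real.exp (∑ i, |z i|) :=
    Real.exp_le_exp.2 (norm_le_sum_abs z)
  have h2 : Real.exp (∑ i, |z i|) = ∏ i, Real.exp |z i| := Real.exp_sum _ _
  have h3 : (∏ i, Real.exp |z i|) ≤ ∏ i, (Real.exp (z i) + Real.exp (-(z i))) := by
    apply Finset.prod_le_prod (fun i _ => (Real.exp_pos _).le)
    intro i _
    rcases abs_choice (z i) with h | h <;> rw [h]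
    · exact le_add_of_nonneg_right (Real.exp_pos _).le
    · exact le_add_of_nonneg_left (Real.exp_pos _).le
  have h4 : (∏ i, (Real.exp (z i) + Real.exp (-(z i)))) =
      ∑ s ∈ (Finset.univ : Finset (Fin n)).powerset, Real.exp ⟪sgnVec n s, z⟫ := by
    rw [Finset.prod_add]
    apply Finset.sum_congr rfl
    intro s hs
    rw [← Real.exp_sum, ← Real.exp_sum, ← Real.exp_add]
    congr 1
    have : ⟪sgnVec n s, z⟫ = ∑ i, (if i ∈ s then (1:ℝ) else -1) * z i := by
      simp [sgnVec, PiLp.inner_apply, RCLike.inner_apply, mul_comm]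
    rw [this, ← Finset.sum_add_sum_compl s]
    congr 1
    · exact Finset.sum_congr rfl (fun i hi => by simp [hi])
    · refine Finset.sum_congr rfl (fun i hi => ?_)
      simp only [Finset.mem_compl] at hi
      simp [hi]
  calc Real.exp ‖z‖ ≤ Real.exp (∑ i, |z i|) := h1
    _ = ∏ i, Real.exp |z i| := h2
    _ ≤ _ := h3
    _ = _ := h4

variable {n : ℕ}

lemma mgf_hasFDerivAt_zero (M : EuclideanSpace ℝ (Fin n) → ℝ)
    (hMmeas : Measurable M) (hMnn : ∀ z, 0 ≤ M z)
    (hMexp : ∀ p : EuclideanSpace ℝ (Fin n),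
      Integrable (fun z => M z * (1 + ‖z‖) * Real.exp ⟪p, z⟫))
    (heven : (∫ z, M z • z) = (0 : EuclideanSpace ℝ (Fin n))) :
    HasFDerivAt (fun p : EuclideanSpace ℝ (Fin n) => ∫ z, M z * Real.exp ⟪p, z⟫)
      (0 : EuclideanSpace ℝ (Fin n) →L[ℝ] ℝ) 0 := by
  have hMexp_meas : ∀ p : EuclideanSpace ℝ (Fin n),
      Measurable (fun z : EuclideanSpace ℝ (Fin n) => Real.exp ⟪p, z⟫) :=
    fun p => (Real.continuous_exp.comp (continuous_const.inner continuous_id)).measurable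
  set F' : EuclideanSpace ℝ (Fin n) → EuclideanSpace ℝ (Fin n)
      → (EuclideanSpace ℝ (Fin n) →L[ℝ] ℝ) :=
    fun p z => (M z * Real.exp ⟪z, p⟫) • innerSL ℝ z with hF'
  set bound : EuclideanSpace ℝ (Fin n) → ℝ :=
    fun z => M z * ‖z‖ * ∑ s ∈ (Finset.univ : Finset (Fin n)).powerset,
      Real.exp ⟪sgnVec n s, z⟫ with hbound
  have hMz_int : Integrable (fun z : EuclideanSpace ℝ (Fin n) => M z * (1 + ‖z‖)) := by
    have h := hMexp 0
    simpa using h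
  have hMint : Integrable M := by
    refine hMz_int.mono' hMmeas.aestronglyMeasurable (Filter.Eventually.of_forall fun z => ?_)
    have h1 : (0:ℝ) ≤ ‖z‖ := norm_nonneg _
    have h2 := hMnn z
    rw [Real.norm_eq_abs, abs_of_nonneg h2]
    nlinarith
  have hMzz_int : Integrable (fun z : EuclideanSpace ℝ (Fin n) => M z • z) := by
    refine hMz_int.mono' (hMmeas.aestronglyMeasurable.smul aestronglyMeasurable_id)
      (Filter.Eventually.of_forall fun z => ?_)
    have h2 := hMnn z
    rw [norm_smul, Real.norm_eq_abs, abs_of_nonneg h2]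
    nlinarith [norm_nonneg (z : EuclideanSpace ℝ (Fin n))]
  have key : HasFDerivAt
      (fun p : EuclideanSpace ℝ (Fin n) => ∫ z, M z * Real.exp ⟪p, z⟫)
      (∫ z, F' 0 z) 0 := by
    apply hasFDerivAt_integral_of_dominated_of_fderiv_le
      (bound := bound) (s := Metric.ball 0 1) (Metric.ball_mem_nhds _ one_pos)
    · exact Filter.Eventually.of_forall fun p =>
        (hMmeas.mul (hMexp_meas p)).aestronglyMeasurable
    · simpa using hMint
    · refine AEStronglyMeasurable.smul (𝕜 := ℝ) ?_ (innerSL ℝ (E := EuclideanSpace ℝ (Fin n))).continuous.aestronglyMeasurable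
      exact (hMmeas.mul ((Real.continuous_exp.comp
        (continuous_id.inner continuous_const)).measurable)).aestronglyMeasurable
    · refine Filter.Eventually.of_forall fun z p hp => ?_
      have hnn : (0:ℝ) ≤ M z * Real.exp ⟪z, p⟫ :=
        mul_nonneg (hMnn z) (Real.exp_pos _).le
      show ‖(M z * Real.exp ⟪z, p⟫) • innerSL ℝ z‖ ≤ bound z
      rw [norm_smul (M z * Real.exp ⟪z, p⟫) (innerSL ℝ z), Real.norm_eq_abs,
        abs_of_nonneg hnn, innerSL_apply_norm]
      have hip : ⟪z, p⟫ ≤ ‖z‖ := by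
        calc ⟪z, p⟫ ≤ ‖z‖ * ‖p‖ := real_inner_le_norm z p
          _ ≤ ‖z‖ * 1 := by
              have : ‖p‖ ≤ 1 := by
                have := mem_ball_iff_norm.1 hp
                simpa using this.le
              exact mul_le_mul_of_nonneg_left this (norm_nonneg _)
          _ = ‖z‖ := mul_one _
      have hexp : Real.exp ⟪z, p⟫ ≤ ∑ s ∈ (Finset.univ : Finset (Fin n)).powerset,
          Real.exp ⟪sgnVec n s, z⟫ :=
        le_trans (Real.exp_le_exp.2 hip) (exp_norm_le_sum z)
      calc M z * Real.exp ⟪z, p⟫ * ‖z‖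
          ≤ M z * (∑ s ∈ (Finset.univ : Finset (Fin n)).powerset,
              Real.exp ⟪sgnVec n s, z⟫) * ‖z‖ := by
            apply mul_le_mul_of_nonneg_right _ (norm_nonneg _)
            exact mul_le_mul_of_nonneg_left hexp (hMnn z)
        _ = bound z := by rw [hbound]; ring
    · rw [hbound]
      have : (fun z : EuclideanSpace ℝ (Fin n) => M z * ‖z‖ *
          ∑ s ∈ (Finset.univ : Finset (Fin n)).powerset, Real.exp ⟪sgnVec n s, z⟫) =
          fun z : EuclideanSpace ℝ (Fin n) => ∑ s ∈ (Finset.univ : Finset (Fin n)).powerset,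
            M z * ‖z‖ * Real.exp ⟪sgnVec n s, z⟫ := by
        funext z; rw [Finset.mul_sum]
      rw [this]
      apply integrable_finset_sum
      intro s _
      refine (hMexp (sgnVec n s)).mono'
        ((hMmeas.mul continuous_norm.measurable).mul
          (hMexp_meas (sgnVec n s))).aestronglyMeasurable
        (Filter.Eventually.of_forall fun z => ?_)
      have h2 := hMnn z
      have h3 := (Real.exp_pos ⟪sgnVec n s, z⟫).le
      have h4 : (0:ℝ) ≤ ‖z‖ := norm_nonneg _
      rw [Real.norm_eq_abs, abs_of_nonneg (by positivity)]
      have : M z * ‖z‖ ≤ M z * (1 + ‖z‖) := by nlinarith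
      exact mul_le_mul_of_nonneg_right this h3
    · refine Filter.Eventually.of_forall fun z p hp => ?_
      have hrw : (fun q : EuclideanSpace ℝ (Fin n) => M z * Real.exp ⟪q, z⟫)
          = fun q : EuclideanSpace ℝ (Fin n) => M z * Real.exp (innerSL ℝ z q) := by
        funext q; rw [innerSL_apply_apply, real_inner_comm]
      rw [hrw, hF']
      have h1 : HasFDerivAt (fun q : EuclideanSpace ℝ (Fin n) => Real.exp (innerSL ℝ z q))
          (Real.exp (innerSL ℝ z p) • innerSL ℝ z) p :=
        (Real.hasDerivAt_exp (innerSL ℝ z p)).comp_hasFDerivAt p ((innerSL ℝ z).hasFDerivAt)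
      have h2 := h1.const_mul (M z)
      simp only [innerSL_apply_apply, smul_smul] at h2 ⊢
      exact h2
  have hzero : (∫ z, F' 0 z) = 0 := by
    have h0 : (fun z : EuclideanSpace ℝ (Fin n) => F' 0 z)
        = fun z : EuclideanSpace ℝ (Fin n) => M z • innerSL ℝ z := by
      funext z; rw [hF']; simp
    rw [h0]
    have hint : Integrable (fun z : EuclideanSpace ℝ (Fin n) => M z • innerSL ℝ z) := by
      refine hMz_int.mono'
        (hMmeas.aestronglyMeasurable.smul (innerSL ℝ).continuous.aestronglyMeasurable)
        (Filter.Eventually.of_forall fun z => ?_)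
      rw [norm_smul (M z) (innerSL ℝ z), Real.norm_eq_abs, abs_of_nonneg (hMnn z),
        innerSL_apply_norm]
      nlinarith [norm_nonneg (z : EuclideanSpace ℝ (Fin n)), hMnn z]
    ext v
    rw [ContinuousLinearMap.zero_apply, ContinuousLinearMap.integral_apply hint v]
    have : (fun z : EuclideanSpace ℝ (Fin n) => (M z • innerSL ℝ z) v)
        = fun z : EuclideanSpace ℝ (Fin n) => ⟪v, M z • z⟫ := by
      funext z
      rw [ContinuousLinearMap.smul_apply, innerSL_apply_apply, real_inner_smul_right,
        real_inner_comm]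
      simp [smul_eq_mul]
    rw [this, integral_inner hMzz_int v, heven, inner_zero_right]
  rwa [hzero] at key

set_option maxHeartbeats 1000000
set_option synthInstance.maxHeartbeats 400000

/-- Lyapunov property of the effective fitness along the
Canonical Equation: if the mutation kernel is even and the Hessian
`D²_yU(t,ȳ(t))` is negative definite, then `t ↦ Λ(ȳ(t),1)` is nonincreasing,
with `d/dt Λ(ȳ(t),1) = ∇_yΛ·(D²_yU)⁻¹∇_yΛ ≤ 0`. -/
theorem fitness_lyapunov
    (n : ℕ) (hn : 1 ≤ n) (T : ℝ) (hT : 0 < T)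
    (Λ : EuclideanSpace ℝ (Fin n) → ℝ → ℝ)
    (hΛ : ContDiff ℝ 1 (fun p : EuclideanSpace ℝ (Fin n) × ℝ => Λ p.1 p.2))
    (M : EuclideanSpace ℝ (Fin n) → ℝ)
    (hMmeas : Measurable M) (hMnn : ∀ z, 0 ≤ M z)
    (hMprob : ∫ z, M z = 1)
    (hMexp : ∀ p : EuclideanSpace ℝ (Fin n),
      Integrable (fun z => M z * (1 + ‖z‖) * Real.exp ⟪p, z⟫))
    (U : ℝ → EuclideanSpace ℝ (Fin n) → ℝ)
    (hU : ContDiff ℝ 2 (fun q : ℝ × EuclideanSpace ℝ (Fin n) => U q.1 q.2))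
    (η : ℝ → EuclideanSpace ℝ (Fin n) → ℝ)
    (hη : ∀ t y, η t y = ∫ z, M z * Real.exp ⟪gradient (U t) y, z⟫)
    (hHJ : ∀ t ∈ Icc (0:ℝ) T, ∀ y, deriv (fun s => U s y) t = -Λ y (η t y))
    (ybar ybar' : ℝ → EuclideanSpace ℝ (Fin n))
    (hybar : ∀ t ∈ Icc (0:ℝ) T, HasDerivWithinAt ybar (ybar' t) (Icc 0 T) t)
    (hybar'cont : ContinuousOn ybar' (Icc 0 T))
    (hcrit : ∀ t ∈ Icc (0:ℝ) T, gradient (U t) (ybar t) = 0)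
    (hinv : ∀ t ∈ Icc (0:ℝ) T,
      IsUnit (fderiv ℝ (fun y => gradient (U t) y) (ybar t)))
    (heven : (∫ z, M z • z) = (0 : EuclideanSpace ℝ (Fin n)))
    (hnegdef : ∀ t ∈ Icc (0:ℝ) T, ∀ v : EuclideanSpace ℝ (Fin n), v ≠ 0 →
      ⟪(fderiv ℝ (fun y => gradient (U t) y) (ybar t)) v, v⟫ < 0) :
    AntitoneOn (fun t => Λ (ybar t) 1) (Icc 0 T) ∧
    ∀ t ∈ Icc (0:ℝ) T,
      HasDerivWithinAt (fun s => Λ (ybar s) 1)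
        (⟪gradient (fun y => Λ y 1) (ybar t),
          (Ring.inverse (fderiv ℝ (fun y => gradient (U t) y) (ybar t)))
            (gradient (fun y => Λ y 1) (ybar t))⟫)
        (Icc 0 T) t ∧
      ⟪gradient (fun y => Λ y 1) (ybar t),
        (Ring.inverse (fderiv ℝ (fun y => gradient (U t) y) (ybar t)))
          (gradient (fun y => Λ y 1) (ybar t))⟫ ≤ 0 := by
  classical
  set f : ℝ × EuclideanSpace ℝ (Fin n) → ℝ := fun q => U q.1 q.2 with hfdef
  have hfd : Differentiable ℝ f := hU.differentiable (by norm_num)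
  have hWc : ContDiff ℝ 1 (fderiv ℝ f) := hU.fderiv_right (by norm_num)
  have hWd : Differentiable ℝ (fderiv ℝ f) := hWc.differentiable (by norm_num)
  have hfW : ∀ q, HasFDerivAt f (fderiv ℝ f q) q := fun q => (hfd q).hasFDerivAt
  -- the continuous linear map sending a functional on ℝ × E to the gradient of its
  -- restriction to E
  set L : ((ℝ × EuclideanSpace ℝ (Fin n)) →L[ℝ] ℝ) →L[ℝ] EuclideanSpace ℝ (Fin n) :=
    ((InnerProductSpace.toDual ℝ
        (EuclideanSpace ℝ (Fin n))).symm.toContinuousLinearEquiv.toContinuousLinearMap).comp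
      ((ContinuousLinearMap.compL ℝ (EuclideanSpace ℝ (Fin n))
          (ℝ × EuclideanSpace ℝ (Fin n)) ℝ).flip
        (ContinuousLinearMap.inr ℝ ℝ (EuclideanSpace ℝ (Fin n)))) with hLdef
  have hLval : ∀ w : (ℝ × EuclideanSpace ℝ (Fin n)) →L[ℝ] ℝ,
      L w = (InnerProductSpace.toDual ℝ (EuclideanSpace ℝ (Fin n))).symm
        (w.comp (ContinuousLinearMap.inr ℝ ℝ (EuclideanSpace ℝ (Fin n)))) := fun w => rfl
  have hLapp : ∀ (w : (ℝ × EuclideanSpace ℝ (Fin n)) →L[ℝ] ℝ)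
      (v : EuclideanSpace ℝ (Fin n)), ⟪L w, v⟫ = w (0, v) := by
    intro w v
    rw [hLval, InnerProductSpace.toDual_symm_apply]
    rfl
  -- F q = gradient of U_{q.1} at q.2
  set F : ℝ × EuclideanSpace ℝ (Fin n) → EuclideanSpace ℝ (Fin n) :=
    fun q => L (fderiv ℝ f q) with hFdef
  have hUty : ∀ t y, HasFDerivAt (U t)
      ((fderiv ℝ f (t, y)).comp (ContinuousLinearMap.inr ℝ ℝ (EuclideanSpace ℝ (Fin n)))) y := by
    intro t y
    have := (hfW (t, y)).comp y (hasFDerivAt_prodMk_right t y)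
    simpa [Function.comp_def] using this
  have hFgrad : ∀ t y, F (t, y) = gradient (U t) y := by
    intro t y
    rw [hFdef, gradient, (hUty t y).fderiv]
    exact hLval _
  have hFd : ∀ q, HasFDerivAt F (L.comp (fderiv ℝ (fderiv ℝ f) q)) q :=
    fun q => L.hasFDerivAt.comp q (hWd q).hasFDerivAt
  -- main pointwise statement
  have key : ∀ t ∈ Icc (0:ℝ) T,
      HasDerivWithinAt (fun s => Λ (ybar s) 1)
        (⟪gradient (fun y => Λ y 1) (ybar t),
          (Ring.inverse (fderiv ℝ (fun y => gradient (U t) y) (ybar t)))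
            (gradient (fun y => Λ y 1) (ybar t))⟫)
        (Icc 0 T) t ∧
      ⟪gradient (fun y => Λ y 1) (ybar t),
        (Ring.inverse (fderiv ℝ (fun y => gradient (U t) y) (ybar t)))
          (gradient (fun y => Λ y 1) (ybar t))⟫ ≤ 0 := by
    intro t ht
    set B := fderiv ℝ (fderiv ℝ f) (t, ybar t) with hBdef
    set DF := L.comp B with hDFdef
    have hDFx : HasFDerivAt F DF (t, ybar t) := hFd (t, ybar t)
    -- derivative of gradient in the space directions
    have hyG : HasFDerivAt (fun y => gradient (U t) y)
        (DF.comp (ContinuousLinearMap.inr ℝ ℝ (EuclideanSpace ℝ (Fin n)))) (ybar t) := by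
      have h1 := hDFx.comp (ybar t) (hasFDerivAt_prodMk_right t (ybar t))
      have h2 : (fun y => F (t, y)) = fun y => gradient (U t) y := funext fun y => hFgrad t y
      rw [← h2]
      simpa [Function.comp_def] using h1
    have hH : fderiv ℝ (fun y => gradient (U t) y) (ybar t)
        = DF.comp (ContinuousLinearMap.inr ℝ ℝ (EuclideanSpace ℝ (Fin n))) := hyG.fderiv
    -- curve derivative: gradient along the curve is constant zero
    have hc : HasDerivWithinAt (fun s => ((s, ybar s) : ℝ × EuclideanSpace ℝ (Fin n)))
        ((1:ℝ), ybar' t) (Icc 0 T) t :=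
      (hasDerivWithinAt_id t _).prodMk (hybar t ht)
    have hcomp : HasDerivWithinAt (fun s => F (s, ybar s)) (DF (1, ybar' t)) (Icc 0 T) t := by
      have := hDFx.comp_hasDerivWithinAt t hc
      simpa [Function.comp_def] using this
    have hzero : HasDerivWithinAt (fun s => F (s, ybar s)) 0 (Icc 0 T) t := by
      refine (hasDerivWithinAt_const t (Icc (0:ℝ) T)
        (0 : EuclideanSpace ℝ (Fin n))).congr (fun s hs => ?_) ?_
      · rw [hFgrad]; exact hcrit s hs
      · rw [hFgrad]; exact hcrit t ht
    have hud : UniqueDiffWithinAt ℝ (Icc (0:ℝ) T) t := uniqueDiffOn_Icc hT t ht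
    have hDF0 : DF (1, ybar' t) = 0 := by
      rw [← hcomp.derivWithin hud, hzero.derivWithin hud]
    -- symmetry of the second derivative
    have hsymm : ∀ v w : ℝ × EuclideanSpace ℝ (Fin n), B v w = B w v :=
      second_derivative_symmetric hfW ((hWd (t, ybar t)).hasFDerivAt)
    -- time derivative function g
    have hgy : HasFDerivAt (fun y => fderiv ℝ f (t, y) ((1:ℝ), (0:EuclideanSpace ℝ (Fin n))))
        (((ContinuousLinearMap.apply ℝ ℝ
            ((1:ℝ), (0:EuclideanSpace ℝ (Fin n)))).comp B).comp
          (ContinuousLinearMap.inr ℝ ℝ (EuclideanSpace ℝ (Fin n)))) (ybar t) := by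
      have h1 : HasFDerivAt (fun q : ℝ × EuclideanSpace ℝ (Fin n) =>
          fderiv ℝ f q ((1:ℝ), (0:EuclideanSpace ℝ (Fin n))))
          ((ContinuousLinearMap.apply ℝ ℝ
            ((1:ℝ), (0:EuclideanSpace ℝ (Fin n)))).comp B) (t, ybar t) := by
        have := (ContinuousLinearMap.apply ℝ ℝ
          ((1:ℝ), (0:EuclideanSpace ℝ (Fin n)))).hasFDerivAt.comp (t, ybar t)
          ((hWd (t, ybar t)).hasFDerivAt)
        simpa [Function.comp_def] using this
      have := h1.comp (ybar t) (hasFDerivAt_prodMk_right t (ybar t))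
      simpa [Function.comp_def, ContinuousLinearMap.comp_assoc] using this
    have hgval : ∀ y, fderiv ℝ f (t, y) ((1:ℝ), (0:EuclideanSpace ℝ (Fin n)))
        = deriv (fun s => U s y) t := by
      intro y
      have h2 : HasDerivAt (fun s : ℝ => ((s, y) : ℝ × EuclideanSpace ℝ (Fin n)))
          ((1:ℝ), (0:EuclideanSpace ℝ (Fin n))) t :=
        (hasDerivAt_id t).prodMk (hasDerivAt_const t y)
      have hd : HasDerivAt (fun s => U s y)
          (fderiv ℝ f (t, y) ((1:ℝ), (0:EuclideanSpace ℝ (Fin n)))) t := by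
        have := (hfW (t, y)).comp_hasDerivAt t h2
        simpa [Function.comp_def] using this
      exact hd.deriv.symm
    -- derivative of η in y vanishes at ybar t
    have hφ := mgf_hasFDerivAt_zero M hMmeas hMnn hMexp heven
    have hφ1 : (∫ z, M z * Real.exp ⟪(0 : EuclideanSpace ℝ (Fin n)), z⟫) = 1 := by
      simpa using hMprob
    have hη1 : η t (ybar t) = 1 := by
      rw [hη, hcrit t ht]; exact hφ1
    have hηd : HasFDerivAt (fun y => η t y)
        (0 : EuclideanSpace ℝ (Fin n) →L[ℝ] ℝ) (ybar t) := by
      have hφ' : HasFDerivAt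
          (fun p : EuclideanSpace ℝ (Fin n) => ∫ z, M z * Real.exp ⟪p, z⟫)
          (0 : EuclideanSpace ℝ (Fin n) →L[ℝ] ℝ) (gradient (U t) (ybar t)) := by
        rw [hcrit t ht]; exact hφ
      have hcomp2 := hφ'.comp (ybar t) hyG
      have heq : (fun y => η t y) = (fun p : EuclideanSpace ℝ (Fin n) =>
          ∫ z, M z * Real.exp ⟪p, z⟫) ∘ (fun y => gradient (U t) y) :=
        funext fun y => hη t y
      rw [heq]
      simpa using hcomp2
    have hpair : HasFDerivAt (fun y : EuclideanSpace ℝ (Fin n) => (y, η t y))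
        (ContinuousLinearMap.inl ℝ (EuclideanSpace ℝ (Fin n)) ℝ) (ybar t) := by
      exact (hasFDerivAt_id (ybar t)).prodMk hηd
    have hΛd : HasFDerivAt (fun p : EuclideanSpace ℝ (Fin n) × ℝ => Λ p.1 p.2)
        (fderiv ℝ (fun p : EuclideanSpace ℝ (Fin n) × ℝ => Λ p.1 p.2) (ybar t, 1))
        (ybar t, 1) := (hΛ.differentiable (by norm_num) _).hasFDerivAt
    set DΛ := fderiv ℝ (fun p : EuclideanSpace ℝ (Fin n) × ℝ => Λ p.1 p.2) (ybar t, 1)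
      with hDΛdef
    have hψ : HasFDerivAt (fun y => Λ y (η t y))
        (DΛ.comp (ContinuousLinearMap.inl ℝ (EuclideanSpace ℝ (Fin n)) ℝ)) (ybar t) := by
      have hΛd' : HasFDerivAt (fun p : EuclideanSpace ℝ (Fin n) × ℝ => Λ p.1 p.2)
          DΛ (ybar t, η t (ybar t)) := by rw [hη1]; exact hΛd
      have := hΛd'.comp (ybar t) hpair
      simpa [Function.comp_def] using this
    have hΛ1d : HasFDerivAt (fun y => Λ y 1)
        (DΛ.comp (ContinuousLinearMap.inl ℝ (EuclideanSpace ℝ (Fin n)) ℝ)) (ybar t) := by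
      have := hΛd.comp (ybar t) (hasFDerivAt_prodMk_left (𝕜 := ℝ) (ybar t) (1:ℝ))
      simpa [Function.comp_def] using this
    have hGip : ∀ v, ⟪gradient (fun y => Λ y 1) (ybar t), v⟫ = DΛ (v, 0) := by
      intro v
      rw [gradient, hΛ1d.fderiv, InnerProductSpace.toDual_symm_apply]
      rfl
    -- equality of the two fderivs of g(t,·)
    have hfun : (fun y => fderiv ℝ f (t, y) ((1:ℝ), (0:EuclideanSpace ℝ (Fin n))))
        = fun y => -Λ y (η t y) :=
      funext fun y => by rw [hgval y, hHJ t ht y]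
    have hgyd2 : HasFDerivAt
        (fun y => fderiv ℝ f (t, y) ((1:ℝ), (0:EuclideanSpace ℝ (Fin n))))
        (-(DΛ.comp (ContinuousLinearMap.inl ℝ (EuclideanSpace ℝ (Fin n)) ℝ))) (ybar t) := by
      rw [hfun]; exact hψ.neg
    have huniq := hgy.unique hgyd2
    have hBsym : ∀ v, B (0, v) ((1:ℝ), (0:EuclideanSpace ℝ (Fin n))) = -(DΛ (v, 0)) := by
      intro v
      have h1 : B (0, v) ((1:ℝ), (0:EuclideanSpace ℝ (Fin n)))
          = ((((ContinuousLinearMap.apply ℝ ℝ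
              ((1:ℝ), (0:EuclideanSpace ℝ (Fin n)))).comp B).comp
            (ContinuousLinearMap.inr ℝ ℝ (EuclideanSpace ℝ (Fin n)))) : _) v := by
        simp
      rw [h1, huniq]
      simp
    -- DF (1, 0) = - gradient Λ(·,1)
    have hDFt : DF ((1:ℝ), (0:EuclideanSpace ℝ (Fin n)))
        = -(gradient (fun y => Λ y 1) (ybar t)) := by
      refine ext_inner_right ℝ fun v => ?_
      have h1 : ⟪DF ((1:ℝ), (0:EuclideanSpace ℝ (Fin n))), v⟫
          = B ((1:ℝ), (0:EuclideanSpace ℝ (Fin n))) (0, v) := by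
        rw [hDFdef]
        exact hLapp _ v
      rw [h1, hsymm _ _, hBsym v, inner_neg_left, hGip v]
    -- solve for ybar'
    have hsplit : DF (1, ybar' t) = DF ((1:ℝ), (0:EuclideanSpace ℝ (Fin n)))
        + DF (0, ybar' t) := by
      rw [← map_add]
      congr 1
      simp [Prod.ext_iff]
    have hHw : (fderiv ℝ (fun y => gradient (U t) y) (ybar t)) (ybar' t)
        = gradient (fun y => Λ y 1) (ybar t) := by
      have h2 : DF (0, ybar' t) = gradient (fun y => Λ y 1) (ybar t) := by
        have h3 := hDF0
        rw [hsplit, hDFt] at h3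
        rw [neg_add_eq_zero] at h3
        exact h3.symm
      rw [hH]
      simpa using h2
    have hRiH : (Ring.inverse (fderiv ℝ (fun y => gradient (U t) y) (ybar t)))
        (gradient (fun y => Λ y 1) (ybar t)) = ybar' t := by
      rw [← hHw]
      have hu := hinv t ht
      have h4 : ((Ring.inverse (fderiv ℝ (fun y => gradient (U t) y) (ybar t)))
          * (fderiv ℝ (fun y => gradient (U t) y) (ybar t))) (ybar' t) = ybar' t := by
        rw [Ring.inverse_mul_cancel _ hu]
        rfl
      simpa [ContinuousLinearMap.mul_apply] using h4
    have hval : (DΛ.comp (ContinuousLinearMap.inl ℝ (EuclideanSpace ℝ (Fin n)) ℝ)) (ybar' t)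
        = ⟪gradient (fun y => Λ y 1) (ybar t),
            (Ring.inverse (fderiv ℝ (fun y => gradient (U t) y) (ybar t)))
              (gradient (fun y => Λ y 1) (ybar t))⟫ := by
      rw [hRiH, hGip]
      rfl
    constructor
    · have := hΛ1d.comp_hasDerivWithinAt t (hybar t ht)
      rw [hval] at this
      simpa [Function.comp_def] using this
    · rw [hRiH, ← hHw]
      rcases eq_or_ne (ybar' t) 0 with h0 | h0
      · simp [h0]
      · exact (hnegdef t ht _ h0).le
  refine ⟨?_, key⟩
  have cont : ContinuousOn (fun s => Λ (ybar s) 1) (Icc 0 T) :=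
    fun s hs => ((key s hs).1).continuousWithinAt
  refine antitoneOn_of_deriv_nonpos (convex_Icc 0 T) cont ?_ ?_
  · intro x hx
    rw [interior_Icc] at hx
    exact (((key x (Ioo_subset_Icc_self hx)).1).hasDerivAt
      (Icc_mem_nhds hx.1 hx.2)).differentiableAt.differentiableWithinAt
  · intro x hx
    rw [interior_Icc] at hx
    have h := key x (Ioo_subset_Icc_self hx)
    rw [(h.1.hasDerivAt (Icc_mem_nhds hx.1 hx.2)).deriv]
    exact h.2
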